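/- In the lazy-multiplier Fenwick tree, define the scaled value of a node j as m_j ⊗ u_j and maintain the invariant that for every internal node j, u_j equals the ⊕-sum of the scaled values of its children. Then the effective leaf value v_n = m_r ⊗ m_{j₁} ⊗ ... ⊗ m_n ⊗ u_n (product of multipliers along the root-to-leaf path applied to u_n), and the scaled value of the root equals ⊕_{n=1}^N v_n. Consequently, replacing m_r by m ⊗ m_r multiplies every effective leaf value, and the root's scaled value, on the left by m. -/
import Mathlib


/-- A full binary tree with lazy multipliers: every node (leaf or internal) stores a
pair `(m, u)` — a lazy left multiplier `m` and an unscaled value `u`. -/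
inductive MTree (K : Type*) where
  | leaf (m u : K) : MTree K
  | node (m u : K) (l r : MTree K) : MTree K

namespace MTree

variable {K : Type*}

/-- The scaled value `m_j ⊗ u_j` of the root node. -/
def scaled [Semiring K] : MTree K → K
  | leaf m u => m * u
  | node m u _ _ => m * u

/-- The invariant: at every internal node `j`, the unscaled value `u_j` is the
`⊕`-sum of the scaled values of its two children. -/
def Inv [Semiring K] : MTree K → Prop
  | leaf _ _ => True
  | node _ u l r => u = scaled l + scaled r ∧ Inv l ∧ Inv r

/-- The effective leaf values: the leaf value `u_n` left-multiplied by the product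
of the multipliers along the root-to-leaf path (accumulated in `acc`). -/
def effLeaves [Semiring K] (acc : K) : MTree K → List K
  | leaf m u => [acc * (m * u)]
  | node m _ l r => effLeaves (acc * m) l ++ effLeaves (acc * m) r

/-- Replace the root multiplier `m_r` by `m ⊗ m_r`. -/
def multRoot (m : K) [Semiring K] : MTree K → MTree K
  | leaf m₀ u => leaf (m * m₀) u
  | node m₀ u l r => node (m * m₀) u l r

end MTree

/-- Correctness of the lazy-multiplier Fenwick tree over a semiring: under the
invariant, the scaled value of the root equals the `⊕`-sum of the effective leaf
values `v_n` (each `u_n` multiplied on the left by the multipliers on its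
root-to-leaf path); consequently, replacing the root multiplier `m_r` by `m ⊗ m_r`
multiplies every effective leaf value, and the root's scaled value, on the left
by `m`. -/

lemma MTree.sum_effLeaves {K : Type*} [Semiring K] (t : MTree K) (ht : t.Inv) :
    ∀ acc : K, (t.effLeaves acc).sum = acc * t.scaled := by
  induction t with
  | leaf m u => intro acc; simp [MTree.effLeaves, MTree.scaled, mul_assoc]
  | node m u l r ihl ihr =>
    intro acc
    obtain ⟨hu, hl, hr⟩ := ht
    simp [MTree.effLeaves, MTree.scaled, ihl hl, ihr hr, hu, mul_add, mul_assoc]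

lemma MTree.effLeaves_mul {K : Type*} [Semiring K] (t : MTree K) :
    ∀ a b : K, t.effLeaves (a * b) = (t.effLeaves b).map (fun x => a * x) := by
  induction t with
  | leaf m u => intro a b; simp [MTree.effLeaves, mul_assoc]
  | node m u l r ihl ihr =>
    intro a b
    simp [MTree.effLeaves, mul_assoc, ihl, ihr]

theorem stmt_16 {K : Type*} [Semiring K] (t : MTree K) (ht : t.Inv) :
    t.scaled = (t.effLeaves 1).sum ∧
      ∀ m : K,
        (t.multRoot m).effLeaves 1 = (t.effLeaves 1).map (fun x => m * x) ∧
        (t.multRoot m).scaled = m * t.scaled := by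
  constructor
  · rw [MTree.sum_effLeaves t ht, one_mul]
  · intro m
    cases t with
    | leaf m₀ u =>
      constructor
      · simp [MTree.effLeaves, MTree.multRoot, mul_assoc]
      · simp [MTree.scaled, MTree.multRoot, mul_assoc]
    | node m₀ u l r =>
      constructor
      · show MTree.effLeaves 1 _ = _
        simp only [MTree.multRoot, MTree.effLeaves, one_mul, List.map_append]
        rw [show m * m₀ = m * m₀ from rfl, MTree.effLeaves_mul l m m₀,
            MTree.effLeaves_mul r m m₀]
      · simp [MTree.scaled, MTree.multRoot, mul_assoc]
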